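/- Let d ≥ 1 and let Y, Z : ℝ² → ℝ^d be C¹ functions of (t,s). Define q = Y·Z and h = √(1 + |Y|² + |Z|² + q²). If Y and Z satisfy ∂ₜY + ∂ₛ((Z + qY)/h) = 0 and ∂ₜZ + ∂ₛ((Y + qZ)/h) = 0 on ℝ², then ∂ₜq + ∂ₛ((q² − 1)/h) = 0 on ℝ². -/

import Mathlib

open scoped RealInnerProductSpace

/-- Partial derivative in the first variable `t` of a map on `ℝ × ℝ`. -/
noncomputable def pt {F : Type*} [NormedAddCommGroup F] [NormedSpace ℝ F]
    (X : ℝ × ℝ → F) (p : ℝ × ℝ) : F := deriv (fun t => X (t, p.2)) p.1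

/-- Partial derivative in the second variable `s` of a map on `ℝ × ℝ`. -/
noncomputable def ps {F : Type*} [NormedAddCommGroup F] [NormedSpace ℝ F]
    (X : ℝ × ℝ → F) (p : ℝ × ℝ) : F := deriv (fun s => X (p.1, s)) p.2

/-- `q = Y·Z`. -/
noncomputable def qf {d : ℕ} (Y Z : ℝ × ℝ → EuclideanSpace ℝ (Fin d)) (p : ℝ × ℝ) : ℝ :=
  ⟪Y p, Z p⟫

/-- `h = √(1 + |Y|² + |Z|² + q²)`. -/
noncomputable def hf {d : ℕ} (Y Z : ℝ × ℝ → EuclideanSpace ℝ (Fin d)) (p : ℝ × ℝ) : ℝ :=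
  Real.sqrt (1 + ‖Y p‖ ^ 2 + ‖Z p‖ ^ 2 + qf Y Z p ^ 2)

set_option linter.unusedVariables false

lemma normsq_hasDerivAt {d : ℕ} {f : ℝ → EuclideanSpace ℝ (Fin d)} {f' : EuclideanSpace ℝ (Fin d)}
    {x : ℝ} (hf : HasDerivAt f f' x) : HasDerivAt (fun y => ‖f y‖ ^ 2) (2 * ⟪f x, f'⟫) x := by
  have h := hf.inner ℝ hf
  simp only [real_inner_self_eq_norm_sq] at h
  exact h.congr_deriv (by rw [real_inner_comm f' (f x)]; ring)

/-- The additional conservation law `∂ₜq + ∂ₛ((q² - 1)/h) = 0` holds for every `C¹` solution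
of the relativistic string equation in conservative form. -/
theorem statement9 (d : ℕ) (hd : 1 ≤ d)
    (Y Z : ℝ × ℝ → EuclideanSpace ℝ (Fin d))
    (hY : ContDiff ℝ 1 Y) (hZ : ContDiff ℝ 1 Z)
    (heq1 : ∀ p : ℝ × ℝ,
      pt Y p + ps (fun q => (hf Y Z q)⁻¹ • (Z q + qf Y Z q • Y q)) p = 0)
    (heq2 : ∀ p : ℝ × ℝ,
      pt Z p + ps (fun q => (hf Y Z q)⁻¹ • (Y q + qf Y Z q • Z q)) p = 0) :
    ∀ p : ℝ × ℝ, pt (qf Y Z) p + ps (fun q => (qf Y Z q ^ 2 - 1) / hf Y Z q) p = 0 := by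
  have hYd : Differentiable ℝ Y := hY.differentiable one_ne_zero
  have hZd : Differentiable ℝ Z := hZ.differentiable one_ne_zero
  rintro ⟨t, s⟩
  have hYs : HasDerivAt (fun s' => Y (t, s')) (ps Y (t, s)) s :=
    (by fun_prop : DifferentiableAt ℝ (fun s' => Y (t, s')) s).hasDerivAt
  have hZs : HasDerivAt (fun s' => Z (t, s')) (ps Z (t, s)) s :=
    (by fun_prop : DifferentiableAt ℝ (fun s' => Z (t, s')) s).hasDerivAt
  have hYt : HasDerivAt (fun t' => Y (t', s)) (pt Y (t, s)) t :=
    (by fun_prop : DifferentiableAt ℝ (fun t' => Y (t', s)) t).hasDerivAt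
  have hZt : HasDerivAt (fun t' => Z (t', s)) (pt Z (t, s)) t :=
    (by fun_prop : DifferentiableAt ℝ (fun t' => Z (t', s)) t).hasDerivAt
  have hq_s : HasDerivAt (fun s' => qf Y Z (t, s'))
      (⟪Y (t, s), ps Z (t, s)⟫ + ⟪ps Y (t, s), Z (t, s)⟫) s := hYs.inner ℝ hZs
  have hq_t : HasDerivAt (fun t' => qf Y Z (t', s))
      (⟪Y (t, s), pt Z (t, s)⟫ + ⟪pt Y (t, s), Z (t, s)⟫) t := hYt.inner ℝ hZt
  have hgpos : (0:ℝ) < 1 + ‖Y (t, s)‖ ^ 2 + ‖Z (t, s)‖ ^ 2 + qf Y Z (t, s) ^ 2 := by positivity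
  have hg_s : HasDerivAt (fun s' => 1 + ‖Y (t, s')‖ ^ 2 + ‖Z (t, s')‖ ^ 2 + qf Y Z (t, s') ^ 2)
      (2 * ⟪Y (t, s), ps Y (t, s)⟫ + 2 * ⟪Z (t, s), ps Z (t, s)⟫ +
        2 * qf Y Z (t, s) ^ 1 * (⟪Y (t, s), ps Z (t, s)⟫ + ⟪ps Y (t, s), Z (t, s)⟫)) s :=
    (((normsq_hasDerivAt hYs).const_add 1).add (normsq_hasDerivAt hZs)).add (hq_s.pow 2)
  have hH_s : HasDerivAt (fun s' => hf Y Z (t, s'))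
      ((2 * ⟪Y (t, s), ps Y (t, s)⟫ + 2 * ⟪Z (t, s), ps Z (t, s)⟫ +
        2 * qf Y Z (t, s) ^ 1 * (⟪Y (t, s), ps Z (t, s)⟫ + ⟪ps Y (t, s), Z (t, s)⟫)) /
        (2 * hf Y Z (t, s))) s := hg_s.sqrt hgpos.ne'
  have hppos : 0 < hf Y Z (t, s) := Real.sqrt_pos.mpr hgpos
  have hp2 : hf Y Z (t, s) ^ 2 = 1 + ‖Y (t, s)‖ ^ 2 + ‖Z (t, s)‖ ^ 2 + qf Y Z (t, s) ^ 2 :=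
    Real.sq_sqrt hgpos.le
  -- A slice
  have hA := (hH_s.inv hppos.ne').smul (hZs.add (hq_s.smul hYs))
  have hB := (hH_s.inv hppos.ne').smul (hYs.add (hq_s.smul hZs))
  have hF := ((hq_s.pow 2).sub_const 1).div hH_s hppos.ne'
  have hpsA : ps (fun q => (hf Y Z q)⁻¹ • (Z q + qf Y Z q • Y q)) (t, s) = _ := hA.deriv
  have hpsB : ps (fun q => (hf Y Z q)⁻¹ • (Y q + qf Y Z q • Z q)) (t, s) = _ := hB.deriv
  have hpsF : ps (fun q => (qf Y Z q ^ 2 - 1) / hf Y Z q) (t, s) = _ := hF.deriv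
  have hptq : pt (qf Y Z) (t, s) = ⟪Y (t, s), pt Z (t, s)⟫ + ⟪pt Y (t, s), Z (t, s)⟫ :=
    hq_t.deriv
  have hptY : pt Y (t, s) = _ := eq_neg_of_add_eq_zero_left (heq1 (t, s))
  have hptZ : pt Z (t, s) = _ := eq_neg_of_add_eq_zero_left (heq2 (t, s))
  rw [hpsA] at hptY
  rw [hpsB] at hptZ
  rw [hptq, hpsF, hptY, hptZ]
  simp only [inner_neg_left, inner_neg_right, inner_add_left, inner_add_right,
    real_inner_smul_left, real_inner_smul_right, real_inner_self_eq_norm_sq, qf, pow_one,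
    Nat.cast_ofNat, Pi.add_apply, Pi.smul_apply, Pi.smul_apply', Pi.inv_apply, Pi.pow_apply,
    (by norm_num : (2:ℕ) - 1 = 1)] at *
  rw [real_inner_comm (ps Z (t, s)) (Z (t, s))]
  have hnY : ‖Y (t, s)‖ ^ 2 =
      hf Y Z (t, s) ^ 2 - 1 - ‖Z (t, s)‖ ^ 2 - (⟪Y (t, s), Z (t, s)⟫) ^ 2 := by
    rw [hp2]; ring
  rw [hnY]
  have h1 : hf Y Z (t, s) ≠ 0 := hppos.ne'
  field_simp
  ring
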